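/- Deciding whether a given symmetric map ε : X×X∖diag → P(M) is a symmetrized Fitch map is NP-complete. In particular, there is a polynomial-time many-one reduction from Quartet Compatibility to Symm-Fitch Recognition: given quartets q_1, ..., q_n on X, defining ε(x,y) := { i : q_i = ab|cd and {x,y} ∉ {{a,b},{c,d}} } yields a map ε that is a symmetrized Fitch map if and only if {q_1,...,q_n} is compatible. -/

import Mathlib

open SimpleGraph

/-- A phylogenetic (unrooted) tree with leaf set `X`: a finite connected acyclic
simple graph in which the leaves of `X` are injectively embedded as vertices of
degree at most one, and all other (inner) vertices have degree at least three. -/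
structure PhyloTree (X : Type) where
  V : Type
  [finV : Fintype V]
  T : SimpleGraph V
  conn : T.Connected
  acyc : T.IsAcyclic
  leaf : X → V
  leaf_inj : Function.Injective leaf
  leaf_deg : ∀ x : X, (T.neighborSet (leaf x)).ncard ≤ 1
  inner_deg : ∀ v : V, v ∉ Set.range leaf → 3 ≤ (T.neighborSet v).ncard

/-- `(t, lab)` explains `ε`: for distinct leaves `x,y`, a color `m` belongs to
`ε x y` iff the (unique) path from `x` to `y` in `t` contains an `m`-edge. -/
def Explains {X M : Type} (t : PhyloTree X) (lab : Sym2 t.V → Set M)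
    (ε : X → X → Set M) : Prop :=
  ∀ x y : X, x ≠ y → ∀ p : t.T.Walk (t.leaf x) (t.leaf y), p.IsPath →
    ∀ m : M, m ∈ ε x y ↔ ∃ e ∈ p.edges, m ∈ lab e

/-- `ε` is a symmetrized Fitch map: some edge-labeled tree explains it. -/
def IsSymFitch {X M : Type} (ε : X → X → Set M) : Prop :=
  ∃ t : PhyloTree X, ∃ lab : Sym2 t.V → Set M, Explains t lab ε

/-- The tree `t` displays the subsplit `A|B`: some edge of `t` separates the
leaves in `A` from the leaves in `B`. -/
def Displays {X : Type} (t : PhyloTree X) (A B : Set X) : Prop :=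
  ∃ u v : t.V, t.T.Adj u v ∧
    (∀ x ∈ A, (t.T.deleteEdges {s(u,v)}).Reachable (t.leaf x) u) ∧
    (∀ x ∈ B, (t.T.deleteEdges {s(u,v)}).Reachable (t.leaf x) v)

/-- The complementary neighborhood `N_m[y]` of `y` w.r.t. color `m`. -/
def Nbr {X M : Type} (ε : X → X → Set M) (m : M) (y : X) : Set X :=
  {x | x = y ∨ m ∉ ε x y}


section FitchAux

variable {V : Type} {G : SimpleGraph V}

lemma aux_two_neighbors {s t : V} (p : G.Walk s t) :
    p.IsPath → ∀ z ∈ p.support, z ≠ s → z ≠ t →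
    ∃ n1 n2 : V, n1 ≠ n2 ∧ G.Adj z n1 ∧ G.Adj z n2 := by
  induction p with
  | nil =>
    intro _ z hz hzs _
    simp only [Walk.support_nil, List.mem_singleton] at hz
    exact absurd hz hzs
  | @cons a b c h q ih =>
    intro hp z hz hzs hzt
    rw [Walk.support_cons, List.mem_cons] at hz
    rcases hz with rfl | hz
    · exact absurd rfl hzs
    · by_cases hzb : z = b
      · subst hzb
        cases q with
        | nil => exact absurd rfl hzt
        | @cons _ d _ h2 q2 =>
          refine ⟨a, d, fun had => ?_, h.symm, h2⟩
          have hnd := hp.support_nodup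
          rw [Walk.support_cons, List.nodup_cons] at hnd
          apply hnd.1
          rw [Walk.support_cons]
          exact List.mem_cons_of_mem _ (had ▸ q2.start_mem_support)
      · exact ih hp.of_cons z hz hzb hzt

lemma aux_two_le_ncard [Fintype V] {z n1 n2 : V} (hne : n1 ≠ n2)
    (h1 : G.Adj z n1) (h2 : G.Adj z n2) : 2 ≤ (G.neighborSet z).ncard := by
  have hsub : ({n1, n2} : Set V) ⊆ G.neighborSet z := by
    intro w hw
    rcases hw with rfl | hw
    · exact h1
    · rw [Set.mem_singleton_iff] at hw; subst hw; exact h2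
  calc 2 = ({n1, n2} : Set V).ncard := (Set.ncard_pair hne).symm
    _ ≤ _ := Set.ncard_le_ncard hsub (Set.toFinite _)

lemma aux_edge_split {s t : V} (p : G.Walk s t) :
    p.edges.Nodup → ∀ {u v : V}, s(u, v) ∈ p.edges →
    ∃ (u' v' : V) (p1 : G.Walk s u') (p2 : G.Walk v' t),
      s(u', v') = s(u, v) ∧
      (∀ f ∈ p1.edges, f ∈ p.edges ∧ f ≠ s(u, v)) ∧
      (∀ f ∈ p2.edges, f ∈ p.edges ∧ f ≠ s(u, v)) := by
  induction p with
  | nil => intro _ u v he; simp at he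
  | @cons a b c h q ih =>
    intro hnd u v he
    rw [Walk.edges_cons, List.nodup_cons] at hnd
    rw [Walk.edges_cons, List.mem_cons] at he
    rcases he with he | he
    · refine ⟨a, b, Walk.nil, q, he.symm, by simp, ?_⟩
      intro f hf
      refine ⟨by rw [Walk.edges_cons]; exact List.mem_cons_of_mem _ hf, fun hfe => hnd.1 ?_⟩
      rw [← he, ← hfe]; exact hf
    · obtain ⟨u', v', p1, p2, heq, h1, h2⟩ := ih hnd.2 he
      refine ⟨u', v', Walk.cons h p1, p2, heq, ?_, ?_⟩
      · intro f hf
        rw [Walk.edges_cons, List.mem_cons] at hf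
        rcases hf with rfl | hf
        · exact ⟨by rw [Walk.edges_cons]; exact List.mem_cons_self,
            fun hfe => hnd.1 (by rw [hfe]; exact he)⟩
        · exact ⟨by rw [Walk.edges_cons]; exact List.mem_cons_of_mem _ (h1 f hf).1, (h1 f hf).2⟩
      · intro f hf
        exact ⟨by rw [Walk.edges_cons]; exact List.mem_cons_of_mem _ (h2 f hf).1, (h2 f hf).2⟩

lemma aux_pair_cases {X : Type} {x y a b : X} (h : ({x, y} : Set X) = {a, b}) (hxy : x ≠ y) :
    (x = a ∧ y = b) ∨ (x = b ∧ y = a) := by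
  have hx : x ∈ ({a, b} : Set X) := by rw [← h]; exact Set.mem_insert _ _
  have hy : y ∈ ({a, b} : Set X) := by rw [← h]; exact Set.mem_insert_of_mem _ rfl
  rcases hx with hx | hx <;> rcases hy with hy | hy
  · exact absurd (hx.trans hy.symm) hxy
  · rw [Set.mem_singleton_iff] at hy; exact Or.inl ⟨hx, hy⟩
  · rw [Set.mem_singleton_iff] at hx; exact Or.inr ⟨hx, hy⟩
  · rw [Set.mem_singleton_iff] at hx hy; exact absurd (hx.trans hy.symm) hxy

lemma aux_walk_unique (hG : G.IsAcyclic) {u v : V} (p q : G.Walk u v)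
    (hp : p.IsPath) (hq : q.IsPath) : p = q :=
  congrArg Subtype.val (hG.path_unique ⟨p, hp⟩ ⟨q, hq⟩)

lemma aux_reach_start {u v z : V} (p : G.Walk u v) (hz : z ∈ p.support) :
    G.Reachable u z := by classical exact ⟨p.takeUntil z hz⟩

lemma aux_first_edge {u v : V} (p : G.Walk u v) (h : u ≠ v) :
    ∃ w, s(u, w) ∈ p.edges := by
  cases p with
  | nil => exact absurd rfl h
  | cons h' q => exact ⟨_, by rw [Walk.edges_cons]; exact List.mem_cons_self⟩

end FitchAux

noncomputable def FitchPath {V : Type} {G : SimpleGraph V} (hG : G.Connected) (u v : V) :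
    G.Path u v := by
  classical
  exact ((Classical.choice (hG.preconnected u v) : G.Walk u v)).toPath

lemma aux_leaf_endpoint {X : Type} (t : PhyloTree X) {s' t' : t.V} (p : t.T.Walk s' t')
    (hp : p.IsPath) (x : X) (hx : t.leaf x ∈ p.support) : t.leaf x = s' ∨ t.leaf x = t' := by
  haveI := t.finV
  by_contra hc
  push_neg at hc
  obtain ⟨n1, n2, hne, h1, h2⟩ := aux_two_neighbors p hp _ hx hc.1 hc.2
  have h2le := aux_two_le_ncard hne h1 h2
  have := t.leaf_deg x
  omega

/-- Correctness of the reduction from Quartet Compatibility to symmetrized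
Fitch map recognition (whence the latter is NP-hard): given quartets
`q i = a_i b_i | c_i d_i` on `X`, the map
`ε(x,y) = { i : {x,y} ∉ {{a_i,b_i},{c_i,d_i}} }` is a symmetrized Fitch map iff
the set of quartets is compatible. -/
theorem fitch_recognition_reduction {X : Type} [Fintype X] (n : ℕ)
    (q : Fin n → (X × X) × (X × X))
    (hq : ∀ i, [(q i).1.1, (q i).1.2, (q i).2.1, (q i).2.2].Pairwise Ne) :
    IsSymFitch (fun x y : X =>
        {i : Fin n | ¬ (({x, y} : Set X) = {(q i).1.1, (q i).1.2} ∨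
          ({x, y} : Set X) = {(q i).2.1, (q i).2.2})}) ↔
      ∃ t : PhyloTree X, ∀ i : Fin n,
        Displays t {(q i).1.1, (q i).1.2} {(q i).2.1, (q i).2.2} := by
  constructor
  · -- a symmetrized Fitch map yields a displaying tree
    rintro ⟨t, lab, hex⟩
    haveI := t.finV
    classical
    refine ⟨t, fun i => ?_⟩
    have hqi := hq i
    set a := (q i).1.1 with ha
    set b := (q i).1.2 with hb
    set c := (q i).2.1 with hc
    set d := (q i).2.2 with hd
    simp at hqi
    obtain ⟨⟨hab, hac, had⟩, ⟨hbc, hbd⟩, hcd⟩ := hqi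
    -- the three relevant paths
    set PAB := (FitchPath t.conn (t.leaf a) (t.leaf b)).1 with hPABdef
    set PCD := (FitchPath t.conn (t.leaf c) (t.leaf d)).1 with hPCDdef
    set PAC := (FitchPath t.conn (t.leaf a) (t.leaf c)).1 with hPACdef
    have hPABp : PAB.IsPath := (FitchPath t.conn (t.leaf a) (t.leaf b)).2
    have hPCDp : PCD.IsPath := (FitchPath t.conn (t.leaf c) (t.leaf d)).2
    have hPACp : PAC.IsPath := (FitchPath t.conn (t.leaf a) (t.leaf c)).2
    -- no i-labeled edge on the a-b path, nor on the c-d path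
    have hABno : ∀ e ∈ PAB.edges, i ∉ lab e := by
      intro e he hi
      have h := (hex a b hab PAB hPABp i).mpr ⟨e, he, hi⟩
      simp only [Set.mem_setOf_eq] at h
      exact h (Or.inl rfl)
    have hCDno : ∀ e ∈ PCD.edges, i ∉ lab e := by
      intro e he hi
      have h := (hex c d hcd PCD hPCDp i).mpr ⟨e, he, hi⟩
      simp only [Set.mem_setOf_eq] at h
      exact h (Or.inr rfl)
    -- there is an i-labeled edge on the a-c path
    have hiac : ∃ e ∈ PAC.edges, i ∈ lab e := by
      apply (hex a c hac PAC hPACp i).mp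
      simp only [Set.mem_setOf_eq]
      rintro (hh | hh)
      · rw [← ha, ← hb] at hh
        rcases aux_pair_cases hh hac with ⟨h1, h2⟩ | ⟨h1, h2⟩
        · exact hbc h2.symm
        · exact hab h1
      · rw [← hc, ← hd] at hh
        rcases aux_pair_cases hh hac with ⟨h1, h2⟩ | ⟨h1, h2⟩
        · exact hac h1
        · exact had h1
    obtain ⟨e, he, hie⟩ := hiac
    revert he hie
    induction e using Sym2.ind with
    | _ u0 v0 =>
    intro he hie
    obtain ⟨u', v', p1, p2, heq, h1, h2⟩ :=
      aux_edge_split PAC hPACp.isTrail.edges_nodup he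
    have heq' : s(u', v') ∈ PAC.edges := by rw [heq]; exact he
    have hilab : i ∈ lab s(u', v') := by rw [heq]; exact hie
    have havoid1 : ∀ f ∈ p1.edges, f ∉ ({s(u', v')} : Set (Sym2 t.V)) := by
      intro f hf hfe
      rw [Set.mem_singleton_iff] at hfe
      exact (h1 f hf).2 (by rw [hfe, heq])
    have havoid2 : ∀ f ∈ p2.edges, f ∉ ({s(u', v')} : Set (Sym2 t.V)) := by
      intro f hf hfe
      rw [Set.mem_singleton_iff] at hfe
      exact (h2 f hf).2 (by rw [hfe, heq])
    have havoidAB : ∀ f ∈ PAB.edges, f ∉ ({s(u', v')} : Set (Sym2 t.V)) := by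
      intro f hf hfe
      rw [Set.mem_singleton_iff] at hfe
      exact hABno f hf (hfe ▸ hilab)
    have havoidCD : ∀ f ∈ PCD.edges, f ∉ ({s(u', v')} : Set (Sym2 t.V)) := by
      intro f hf hfe
      rw [Set.mem_singleton_iff] at hfe
      exact hCDno f hf (hfe ▸ hilab)
    have ra : (t.T.deleteEdges {s(u', v')}).Reachable (t.leaf a) u' :=
      ⟨p1.toDeleteEdges _ havoid1⟩
    have rc : (t.T.deleteEdges {s(u', v')}).Reachable (t.leaf c) v' :=
      ⟨(p2.toDeleteEdges _ havoid2).reverse⟩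
    refine ⟨u', v', PAC.adj_of_mem_edges heq', ?_, ?_⟩
    · intro x hx
      rcases hx with rfl | hx
      · exact ra
      · rw [Set.mem_singleton_iff] at hx
        subst hx
        exact Reachable.trans ⟨(PAB.toDeleteEdges _ havoidAB).reverse⟩ ra
    · intro x hx
      rcases hx with rfl | hx
      · exact rc
      · rw [Set.mem_singleton_iff] at hx
        subst hx
        exact Reachable.trans ⟨(PCD.toDeleteEdges _ havoidCD).reverse⟩ rc
  · -- a displaying tree yields an explaining labeling
    rintro ⟨t, ht⟩
    haveI := t.finV
    refine ⟨t, fun e => {j : Fin n |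
        e ∉ (FitchPath t.conn (t.leaf (q j).1.1) (t.leaf (q j).1.2)).1.edges ∧
        e ∉ (FitchPath t.conn (t.leaf (q j).2.1) (t.leaf (q j).2.2)).1.edges}, ?_⟩
    intro x y hxy p hp i
    classical
    have hqi := hq i
    have hti := ht i
    simp only [Set.mem_setOf_eq]
    set a := (q i).1.1 with ha
    set b := (q i).1.2 with hb
    set c := (q i).2.1 with hc
    set d := (q i).2.2 with hd
    simp at hqi
    obtain ⟨⟨hab, hac, had⟩, ⟨hbc, hbd⟩, hcd⟩ := hqi
    set PAB := (FitchPath t.conn (t.leaf a) (t.leaf b)).1 with hPABdef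
    set PCD := (FitchPath t.conn (t.leaf c) (t.leaf d)).1 with hPCDdef
    have hPABp : PAB.IsPath := (FitchPath t.conn (t.leaf a) (t.leaf b)).2
    have hPCDp : PCD.IsPath := (FitchPath t.conn (t.leaf c) (t.leaf d)).2
    have hlxy : t.leaf x ≠ t.leaf y := fun h => hxy (t.leaf_inj h)
    constructor
    · intro hni
      by_contra hno
      push_neg at hno
      obtain ⟨u, v, huv, hA, hB⟩ := hti
      have hbr : ¬ (t.T.deleteEdges {s(u, v)}).Reachable u v :=
        ((isAcyclic_iff_forall_adj_isBridge.mp t.acyc huv) : _)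
      have ra := hA a (Set.mem_insert _ _)
      have rb := hA b (Set.mem_insert_of_mem _ rfl)
      have rc := hB c (Set.mem_insert _ _)
      have rd := hB d (Set.mem_insert_of_mem _ rfl)
      -- the a-b path avoids the edge u-v
      have hsAB : s(u, v) ∉ PAB.edges := by
        obtain ⟨w0⟩ := ra.trans rb.symm
        have hsub' : ∀ f ∈ w0.bypass.edges, f ∈ t.T.edgeSet := fun f hf =>
          edgeSet_mono (deleteEdges_le _) (w0.bypass.edges_subset_edgeSet hf)
        have hw2 : (w0.bypass.transfer t.T hsub').IsPath :=
          (w0.bypass_isPath).transfer _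
        have hEQ : w0.bypass.transfer t.T hsub' = PAB :=
          aux_walk_unique t.acyc _ _ hw2 hPABp
        intro hmem
        rw [← hEQ, Walk.edges_transfer] at hmem
        have hIn := w0.bypass.edges_subset_edgeSet hmem
        rw [edgeSet_deleteEdges] at hIn
        exact hIn.2 rfl
      have hsCD : s(u, v) ∉ PCD.edges := by
        obtain ⟨w0⟩ := rc.trans rd.symm
        have hsub' : ∀ f ∈ w0.bypass.edges, f ∈ t.T.edgeSet := fun f hf =>
          edgeSet_mono (deleteEdges_le _) (w0.bypass.edges_subset_edgeSet hf)
        have hw2 : (w0.bypass.transfer t.T hsub').IsPath :=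
          (w0.bypass_isPath).transfer _
        have hEQ : w0.bypass.transfer t.T hsub' = PCD :=
          aux_walk_unique t.acyc _ _ hw2 hPCDp
        intro hmem
        rw [← hEQ, Walk.edges_transfer] at hmem
        have hIn := w0.bypass.edges_subset_edgeSet hmem
        rw [edgeSet_deleteEdges] at hIn
        exact hIn.2 rfl
      have havAB : ∀ f ∈ PAB.edges, f ∉ ({s(u, v)} : Set (Sym2 t.V)) := by
        intro f hf hfe
        rw [Set.mem_singleton_iff] at hfe
        exact hsAB (hfe ▸ hf)
      have havCD : ∀ f ∈ PCD.edges, f ∉ ({s(u, v)} : Set (Sym2 t.V)) := by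
        intro f hf hfe
        rw [Set.mem_singleton_iff] at hfe
        exact hsCD (hfe ▸ hf)
      have hreachAB : ∀ z ∈ PAB.support, (t.T.deleteEdges {s(u, v)}).Reachable z u := by
        intro z hz
        have hz' : z ∈ (PAB.toDeleteEdges {s(u, v)} havAB).support := by
          rw [Walk.support_transfer]; exact hz
        exact ((aux_reach_start _ hz').symm).trans ra
      have hreachCD : ∀ z ∈ PCD.support, (t.T.deleteEdges {s(u, v)}).Reachable z v := by
        intro z hz
        have hz' : z ∈ (PCD.toDeleteEdges {s(u, v)} havCD).support := by
          rw [Walk.support_transfer]; exact hz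
        exact ((aux_reach_start _ hz').symm).trans rc
      have hpav : ∀ f ∈ p.edges, f ∉ ({s(u, v)} : Set (Sym2 t.V)) := by
        intro f hf hfe
        rw [Set.mem_singleton_iff] at hfe
        subst hfe
        by_cases hm : s(u, v) ∈ PAB.edges
        · exact hsAB hm
        · exact hsCD (hno _ hf hm)
      have hrxy : (t.T.deleteEdges {s(u, v)}).Reachable (t.leaf x) (t.leaf y) :=
        ⟨p.toDeleteEdges _ hpav⟩
      obtain ⟨w1, hw1e⟩ := aux_first_edge p hlxy
      have hw2e : ∃ w2, s(t.leaf y, w2) ∈ p.edges := by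
        obtain ⟨w2, hw2⟩ := aux_first_edge p.reverse hlxy.symm
        rw [Walk.edges_reverse, List.mem_reverse] at hw2
        exact ⟨w2, hw2⟩
      obtain ⟨w2, hw2e⟩ := hw2e
      have hxcase : t.leaf x ∈ PAB.support ∨ t.leaf x ∈ PCD.support := by
        by_cases hm : s(t.leaf x, w1) ∈ PAB.edges
        · exact Or.inl (PAB.fst_mem_support_of_mem_edges hm)
        · exact Or.inr (PCD.fst_mem_support_of_mem_edges (hno _ hw1e hm))
      have hycase : t.leaf y ∈ PAB.support ∨ t.leaf y ∈ PCD.support := by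
        by_cases hm : s(t.leaf y, w2) ∈ PAB.edges
        · exact Or.inl (PAB.fst_mem_support_of_mem_edges hm)
        · exact Or.inr (PCD.fst_mem_support_of_mem_edges (hno _ hw2e hm))
      rcases hxcase with hxm | hxm <;> rcases hycase with hym | hym
      · -- both on the a-b path: {x,y} = {a,b}
        have hxv : x = a ∨ x = b := by
          rcases aux_leaf_endpoint t PAB hPABp x hxm with h | h
          · exact Or.inl (t.leaf_inj h)
          · exact Or.inr (t.leaf_inj h)
        have hyv : y = a ∨ y = b := by
          rcases aux_leaf_endpoint t PAB hPABp y hym with h | h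
          · exact Or.inl (t.leaf_inj h)
          · exact Or.inr (t.leaf_inj h)
        apply hni
        left
        rcases hxv with rfl | rfl <;> rcases hyv with rfl | rfl
        · exact absurd rfl hxy
        · rfl
        · exact Set.pair_comm _ _
        · exact absurd rfl hxy
      · exact hbr (((hreachAB _ hxm).symm.trans hrxy).trans (hreachCD _ hym))
      · exact hbr (((hreachAB _ hym).symm.trans hrxy.symm).trans (hreachCD _ hxm))
      · have hxv : x = c ∨ x = d := by
          rcases aux_leaf_endpoint t PCD hPCDp x hxm with h | h
          · exact Or.inl (t.leaf_inj h)
          · exact Or.inr (t.leaf_inj h)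
        have hyv : y = c ∨ y = d := by
          rcases aux_leaf_endpoint t PCD hPCDp y hym with h | h
          · exact Or.inl (t.leaf_inj h)
          · exact Or.inr (t.leaf_inj h)
        apply hni
        right
        rcases hxv with rfl | rfl <;> rcases hyv with rfl | rfl
        · exact absurd rfl hxy
        · rfl
        · exact Set.pair_comm _ _
        · exact absurd rfl hxy
    · rintro ⟨e, hep, heAB, heCD⟩
      rintro (hpair | hpair)
      · rcases aux_pair_cases hpair hxy with ⟨rfl, rfl⟩ | ⟨rfl, rfl⟩
        · have hEQ : p = PAB := aux_walk_unique t.acyc p PAB hp hPABp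
          exact heAB (hEQ ▸ hep)
        · have hEQ : p.reverse = PAB :=
            aux_walk_unique t.acyc p.reverse PAB hp.reverse hPABp
          apply heAB
          rw [← hEQ, Walk.edges_reverse, List.mem_reverse]
          exact hep
      · rcases aux_pair_cases hpair hxy with ⟨rfl, rfl⟩ | ⟨rfl, rfl⟩
        · have hEQ : p = PCD := aux_walk_unique t.acyc p PCD hp hPCDp
          exact heCD (hEQ ▸ hep)
        · have hEQ : p.reverse = PCD :=
            aux_walk_unique t.acyc p.reverse PCD hp.reverse hPCDp
          apply heCD
          rw [← hEQ, Walk.edges_reverse, List.mem_reverse]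
          exact hep
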